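/- For integers r ≥ s ≥ 3 with r ≤ ⌊(5s−1)/3⌋ − 1, the minimum n such that every 3-coloring Δ : [1,n] → {1,2,3} admits monochromatic subsets S₁, S₂ with |S₁| = s, |S₂| = r, max(S₁) < min(S₂), and diam(S₁) ≤ diam(S₂), equals 9s − 7. -/

import Mathlib

open Finset

/-- diameter of a finite set of naturals -/
def diam (S : Finset ℕ) : ℕ := (S.max.getD 0) - (S.min.getD 0)

/-- S is monochromatic under a coloring -/
def Mono {α : Type*} (f : ℕ → α) (S : Finset ℕ) : Prop := ∀ a ∈ S, ∀ b ∈ S, f a = f b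

/-- S is zero-sum mod m under an integer coloring -/
def ZeroSum (f : ℕ → ℤ) (m : ℕ) (S : Finset ℕ) : Prop := (m : ℤ) ∣ ∑ x ∈ S, f x

/-- every element of S colored ∞ (= none) -/
def InftyMono (f : ℕ → Option ℤ) (S : Finset ℕ) : Prop := ∀ x ∈ S, f x = none

/-- S consists of ℤ-colored elements and is zero-sum mod m -/
def ZeroSumOpt (f : ℕ → Option ℤ) (m : ℕ) (S : Finset ℕ) : Prop :=
  (∀ x ∈ S, (f x).isSome) ∧ (m : ℤ) ∣ ∑ x ∈ S, (f x).getD 0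

lemma diam_eq' (S : Finset ℕ) (h : S.Nonempty) : diam S = S.max' h - S.min' h := by
  unfold diam
  rw [← Finset.coe_max' h, ← Finset.coe_min' h]
  rfl
lemma exists_botseg (T : Finset ℕ) (j : ℕ) (hj : j ≤ T.card) :
    ∃ X, X ⊆ T ∧ X.card = j ∧ ∀ x ∈ X, ∀ y ∈ T, y ∉ X → x < y := by
  induction j with
  | zero => exact ⟨∅, by simp⟩
  | succ n ih =>
    obtain ⟨X, hXT, hXc, hXlt⟩ := ih (le_trans (Nat.le_succ n) hj)
    have hne : (T \ X).Nonempty := by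
      rw [← card_pos, card_sdiff_of_subset hXT]; omega
    set m := (T \ X).min' hne with hm
    have hmmem : m ∈ T \ X := min'_mem _ _
    rw [mem_sdiff] at hmmem
    refine ⟨insert m X, insert_subset hmmem.1 hXT, ?_, ?_⟩
    · rw [card_insert_of_notMem hmmem.2, hXc]
    · intro x hx y hy hyX
      rcases mem_insert.1 hx with rfl | hx'
      · have hymem : y ∈ T \ X := mem_sdiff.2 ⟨hy, fun h => hyX (mem_insert_of_mem h)⟩
        rcases lt_or_eq_of_le (min'_le _ _ hymem) with h | h
        · exact h
        · exact absurd (h ▸ mem_insert_self m X) hyX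
      · exact hXlt x hx' y hy (fun h => hyX (mem_insert_of_mem h))
lemma exists_topseg (T : Finset ℕ) (j : ℕ) (hj : j ≤ T.card) :
    ∃ X, X ⊆ T ∧ X.card = j ∧ ∀ x ∈ X, ∀ y ∈ T, y ∉ X → y < x := by
  induction j with
  | zero => exact ⟨∅, by simp⟩
  | succ n ih =>
    obtain ⟨X, hXT, hXc, hXlt⟩ := ih (le_trans (Nat.le_succ n) hj)
    have hne : (T \ X).Nonempty := by
      rw [← card_pos, card_sdiff_of_subset hXT]; omega
    set m := (T \ X).max' hne with hm
    have hmmem : m ∈ T \ X := max'_mem _ _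
    rw [mem_sdiff] at hmmem
    refine ⟨insert m X, insert_subset hmmem.1 hXT, ?_, ?_⟩
    · rw [card_insert_of_notMem hmmem.2, hXc]
    · intro x hx y hy hyX
      rcases mem_insert.1 hx with rfl | hx'
      · have hymem : y ∈ T \ X := mem_sdiff.2 ⟨hy, fun h => hyX (mem_insert_of_mem h)⟩
        rcases lt_or_eq_of_le (le_max' _ _ hymem) with h | h
        · exact h
        · exact absurd (h ▸ mem_insert_self m X) hyX
      · exact hXlt x hx' y hy (fun h => hyX (mem_insert_of_mem h))


lemma pair_core (s r p : ℕ) (hs : 3 ≤ s) (hsr : s ≤ r) (Y Z : Finset ℕ)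
    (hYne : Y.Nonempty) (hZne : Z.Nonempty)
    (hdY : diam Y < p) (hdZ : diam Z < p) (hdisj : Disjoint Y Z)
    (hY1 : ∀ x ∈ Y, 1 ≤ x) (hTc : s ≤ Y.card ∨ True)
    (hav : ∀ X : Finset ℕ, X ⊆ Y → X.card = s → (∀ a ∈ X, ∀ b ∈ Z, a < b) → diam Z < diam X)
    (hcZ : r ≤ Z.card)
    (hlt : Y.min' hYne < Z.min' hZne) :
    Y.card + Z.card ≤ p + s - 1 := by
  classical
  rw [diam_eq' _ hYne] at hdY
  rw [diam_eq' _ hZne] at hdZ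
  have hy1M : Y.min' hYne ≤ Y.max' hYne := min'_le _ _ (max'_mem _ _)
  have hz1M : Z.min' hZne ≤ Z.max' hZne := min'_le _ _ (max'_mem _ _)
  rcases le_or_gt (Z.max' hZne) (Y.max' hYne) with hcase | hcase
  · have hsub : Y ∪ Z ⊆ Icc (Y.min' hYne) (Y.max' hYne) := by
      intro x hx
      rcases mem_union.1 hx with h | h
      · exact mem_Icc.2 ⟨min'_le _ _ h, le_max' _ _ h⟩
      · exact mem_Icc.2 ⟨le_trans (le_of_lt hlt) (min'_le _ _ h),
          le_trans (le_max' _ _ h) hcase⟩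
    have hcard := card_le_card hsub
    rw [card_union_of_disjoint hdisj, Nat.card_Icc] at hcard
    omega
  · set T := Y.filter (fun x => x < Z.min' hZne) with hTdef
    set U := Y.filter (fun x => ¬ x < Z.min' hZne) with hUdef
    have hTU : T.card + U.card = Y.card := card_filter_add_card_filter_not _
    have hUZsub : U ∪ Z ⊆ Icc (Z.min' hZne) (Z.max' hZne) := by
      intro x hx
      rcases mem_union.1 hx with h | h
      · have h' := mem_filter.1 h
        have h'' := h'.2
        exact mem_Icc.2 ⟨by omega, le_trans (le_max' _ _ h'.1) (le_of_lt hcase)⟩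
      · exact mem_Icc.2 ⟨min'_le _ _ h, le_max' _ _ h⟩
    have hdisjUZ : Disjoint U Z := hdisj.mono_left (filter_subset _ _)
    have hUZ := card_le_card hUZsub
    rw [card_union_of_disjoint hdisjUZ, Nat.card_Icc] at hUZ
    rcases le_or_gt T.card (s-1) with ha | ha
    · omega
    · obtain ⟨Xt, hXtsub, hXtcard, hXttop⟩ := exists_topseg T s (by omega)
      have hXtne : Xt.Nonempty := card_pos.1 (by omega)
      have hTne : T.Nonempty := hXtne.mono hXtsub
      have hTsubY : T ⊆ Y := filter_subset _ _
      have hTlt : ∀ x ∈ T, x < Z.min' hZne := fun x hx => (mem_filter.1 hx).2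
      have hy1T : Y.min' hYne ∈ T := mem_filter.2 ⟨min'_mem _ _, hlt⟩
      have hminT1 : T.min' hTne ≤ Y.min' hYne := min'_le _ _ hy1T
      have hminT2 : Y.min' hYne ≤ T.min' hTne := min'_le _ _ (hTsubY (min'_mem _ _))
      have hTXcard : (T \ Xt).card = T.card - s := by rw [card_sdiff_of_subset hXtsub, hXtcard]
      have hTXsub : T \ Xt ⊆ Icc (T.min' hTne) (Xt.min' hXtne - 1) := by
        intro y hy
        have hy' := mem_sdiff.1 hy
        have hlty : y < Xt.min' hXtne := hXttop (Xt.min' hXtne) (min'_mem _ _) y hy'.1 hy'.2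
        exact mem_Icc.2 ⟨min'_le _ _ hy'.1, by omega⟩
      have hTXc := card_le_card hTXsub
      rw [hTXcard, Nat.card_Icc] at hTXc
      have hXtmax : Xt.max' hXtne ≤ T.max' hTne := le_max' _ _ (hXtsub (max'_mem _ _))
      have hXtmin : T.min' hTne ≤ Xt.min' hXtne := min'_le _ _ (hXtsub (min'_mem _ _))
      have hmaxTz : T.max' hTne < Z.min' hZne := hTlt _ (max'_mem _ _)
      have hmaxTY : T.max' hTne ≤ Y.max' hYne := le_max' _ _ (hTsubY (max'_mem _ _))
      have hUsub2 : U ⊆ Icc (T.max' hTne + 1) (Y.max' hYne) := by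
        intro x hx
        have h' := mem_filter.1 hx
        have h'' := h'.2
        exact mem_Icc.2 ⟨by omega, le_max' _ _ h'.1⟩
      have hUc := card_le_card hUsub2
      rw [Nat.card_Icc] at hUc
      have hd2 := hav Xt (hXtsub.trans hTsubY) hXtcard
        (fun a ha b hb => lt_of_lt_of_le (hTlt a (hXtsub ha)) (min'_le _ _ hb))
      rw [diam_eq' _ hZne, diam_eq' _ hXtne] at hd2
      have hXtm : Xt.min' hXtne ≤ Xt.max' hXtne := min'_le _ _ (max'_mem _ _)
      have hminT3 : T.min' hTne ≤ T.max' hTne := min'_le _ _ (max'_mem _ _)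
      have hXt1 : 1 ≤ Xt.min' hXtne := hY1 _ (hTsubY (hXtsub (min'_mem _ _)))
      omega

set_option maxHeartbeats 2000000 in
lemma partA (s r : ℕ) (hs : 3 ≤ s) (hsr : s ≤ r) (hr3 : 3*r + 4 ≤ 5*s) (Δ : ℕ → Fin 3) :
    ∃ S₁ S₂ : Finset ℕ, S₁ ⊆ Icc 1 (9*s-7) ∧ S₂ ⊆ Icc 1 (9*s-7) ∧ Mono Δ S₁ ∧ Mono Δ S₂ ∧
    S₁.card = s ∧ S₂.card = r ∧ (∀ a ∈ S₁, ∀ b ∈ S₂, a < b) ∧ diam S₁ ≤ diam S₂ := by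
  by_contra hno
  -- the avoidance principle for larger sets
  have av2 : ∀ X Y : Finset ℕ, X ⊆ Icc 1 (9*s-7) → Y ⊆ Icc 1 (9*s-7) → Mono Δ X → Mono Δ Y →
      s ≤ X.card → r ≤ Y.card → (∀ a ∈ X, ∀ b ∈ Y, a < b) → diam Y < diam X := by
    intro X Y hXs hYs hmX hmY hcX hcY hord
    obtain ⟨X', hX'sub, hX'card⟩ := exists_subset_card_eq hcX
    have hX'ne : X'.Nonempty := card_pos.1 (by omega)
    have hXne : X.Nonempty := hX'ne.mono hX'sub
    have hYne : Y.Nonempty := card_pos.1 (by omega)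
    have hmnmx : Y.min' hYne < Y.max' hYne := min'_lt_max'_of_card _ (by omega)
    have hpair_sub : ({Y.min' hYne, Y.max' hYne} : Finset ℕ) ⊆ Y :=
      insert_subset (min'_mem _ _) (singleton_subset_iff.2 (max'_mem _ _))
    have hpair_card : ({Y.min' hYne, Y.max' hYne} : Finset ℕ).card = 2 := card_pair (ne_of_lt hmnmx)
    obtain ⟨Y', hY'lo, hY'sub, hY'card⟩ := exists_subsuperset_card_eq hpair_sub
      (Nat.le_add_left _ (r - 2)) (by rw [hpair_card]; omega)
    rw [hpair_card] at hY'card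
    have hY'cardr : Y'.card = r := by omega
    have hY'ne : Y'.Nonempty := card_pos.1 (by omega)
    have hminY' : Y'.min' hY'ne = Y.min' hYne := by
      apply le_antisymm
      · exact min'_le _ _ (hY'lo (mem_insert_self _ _))
      · exact le_min' _ _ _ (fun y hy => min'_le _ _ (hY'sub hy))
    have hmaxY' : Y'.max' hY'ne = Y.max' hYne := by
      apply le_antisymm
      · exact max'_le _ _ _ (fun y hy => le_max' _ _ (hY'sub hy))
      · exact le_max' _ _ (hY'lo (mem_insert_of_mem (mem_singleton_self _)))
    have happ : diam Y' < diam X' := by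
      by_contra hle
      push_neg at hle
      exact hno ⟨X', Y', hX'sub.trans hXs, hY'sub.trans hYs,
        (fun a ha b hb => hmX a (hX'sub ha) b (hX'sub hb)),
        (fun a ha b hb => hmY a (hY'sub ha) b (hY'sub hb)),
        hX'card, hY'cardr,
        (fun a ha b hb => hord a (hX'sub ha) b (hY'sub hb)), hle⟩
    rw [diam_eq' Y hYne, diam_eq' X hXne]
    rw [diam_eq' Y' hY'ne, diam_eq' X' hX'ne, hminY', hmaxY'] at happ
    have h1 : X.min' hXne ≤ X'.min' hX'ne := min'_le _ _ (hX'sub (min'_mem _ _))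
    have h2 : X'.max' hX'ne ≤ X.max' hXne := le_max' _ _ (hX'sub (max'_mem _ _))
    omega
  -- pigeonhole on [1, 3s-2]
  have hpig : ∃ c : Fin 3, s ≤ ((Icc 1 (3*s-2)).filter (fun x => Δ x = c)).card := by
    by_contra hc
    push_neg at hc
    have hsum := card_eq_sum_card_fiberwise (f := Δ) (s := Icc 1 (3*s-2)) (t := univ)
      (fun x _ => mem_univ _)
    rw [Fin.sum_univ_three, Nat.card_Icc] at hsum
    have h0 := hc 0; have h1 := hc 1; have h2 := hc 2
    omega
  obtain ⟨c₀, hc₀⟩ := hpig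
  obtain ⟨W, hWsub, hWcard⟩ := exists_subset_card_eq hc₀
  have hWne : W.Nonempty := card_pos.1 (by omega)
  set t := W.max' hWne with htdef
  set m₀ := W.min' hWne with hm₀def
  have hWIcc : W ⊆ Icc 1 (3*s-2) := hWsub.trans (filter_subset _ _)
  have ht32 : t ≤ 3*s-2 := (mem_Icc.1 (hWIcc (max'_mem _ _))).2
  have hm₀1 : 1 ≤ m₀ := (mem_Icc.1 (hWIcc (min'_mem _ _))).1
  have hm₀t : m₀ ≤ t := min'_le _ _ (max'_mem _ _)
  have hWmono : Mono Δ W := by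
    intro a ha b hb
    have h1 := (mem_filter.1 (hWsub ha)).2
    have h2 := (mem_filter.1 (hWsub hb)).2
    rw [h1, h2]
  have hWN : W ⊆ Icc 1 (9*s-7) := hWIcc.trans (Icc_subset_Icc_right (by omega))
  have hdW : diam W = t - m₀ := diam_eq' W hWne
  -- the suffix
  set S : Finset ℕ := Icc (t+1) (9*s-7) with hSdef
  have hSN : S ⊆ Icc 1 (9*s-7) := Icc_subset_Icc_left (by omega)
  have hS1 : ∀ x ∈ S, t+1 ≤ x := fun x hx => (mem_Icc.1 hx).1
  set k : Fin 3 → ℕ := fun c => (S.filter (fun x => Δ x = c)).card with hkdef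
  have hsumk : k 0 + k 1 + k 2 = 9*s-7 - t := by
    have hsum := card_eq_sum_card_fiberwise (f := Δ) (s := S) (t := univ) (fun x _ => mem_univ _)
    rw [Fin.sum_univ_three] at hsum
    have hScard : S.card = 9*s-7 - t := by rw [hSdef, Nat.card_Icc]; omega
    rw [hScard] at hsum
    exact hsum.symm
  have hfsub : ∀ c : Fin 3, S.filter (fun x => Δ x = c) ⊆ Icc 1 (9*s-7) :=
    fun c => (filter_subset _ _).trans hSN
  have hfmono : ∀ c : Fin 3, Mono Δ (S.filter (fun x => Δ x = c)) := by
    intro c a ha b hb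
    rw [(mem_filter.1 ha).2, (mem_filter.1 hb).2]
  have hftl : ∀ c : Fin 3, ∀ x ∈ S.filter (fun x => Δ x = c), t+1 ≤ x :=
    fun c x hx => hS1 x (filter_subset _ _ hx)
  -- clumped colors have small diameter
  have hclump : ∀ c : Fin 3, r ≤ k c → diam (S.filter (fun x => Δ x = c)) < t - m₀ := by
    intro c hkc
    have := av2 W (S.filter (fun x => Δ x = c)) hWN (hfsub c) hWmono (hfmono c) (by omega) hkc
      (fun a ha b hb => lt_of_le_of_lt (le_max' _ _ ha) (by have := hftl c b hb; omega))
    rwa [hdW] at this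
  -- the single-clump inequality
  have hsingle : ∀ c : Fin 3, s + r ≤ k c → 2 * k c + 1 ≤ (t - m₀) + 2*s := by
    intro c hkc
    set Yc := S.filter (fun x => Δ x = c) with hYcdef
    have hYccard : Yc.card = k c := rfl
    have hdYc : diam Yc < t - m₀ := hclump c (by omega)
    obtain ⟨Xb, hXbsub, hXbcard, hXblt⟩ := exists_botseg Yc s (by omega)
    set Zb := Yc \ Xb with hZbdef
    have hZbcard : Zb.card = k c - s := by
      rw [hZbdef, card_sdiff_of_subset hXbsub, hYccard, hXbcard]
    have hXbne : Xb.Nonempty := card_pos.1 (by omega)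
    have hZbne : Zb.Nonempty := card_pos.1 (by omega)
    have hordXZ : ∀ a ∈ Xb, ∀ b ∈ Zb, a < b := fun a ha b hb =>
      hXblt a ha b (mem_sdiff.1 hb).1 (mem_sdiff.1 hb).2
    have hZbsub : Zb ⊆ Yc := sdiff_subset
    have hd2 := av2 Xb Zb (hXbsub.trans (hfsub c)) (hZbsub.trans (hfsub c))
      (fun a ha b hb => hfmono c a (hXbsub ha) b (hXbsub hb))
      (fun a ha b hb => hfmono c a (hZbsub ha) b (hZbsub hb))
      (by omega) (by omega) hordXZ
    have hYcne : Yc.Nonempty := hXbne.mono hXbsub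
    rw [diam_eq' _ hZbne, diam_eq' _ hXbne] at hd2
    rw [diam_eq' _ hYcne] at hdYc
    have f1 : Yc.min' hYcne ≤ Xb.min' hXbne := min'_le _ _ (hXbsub (min'_mem _ _))
    have f2 : Xb.max' hXbne < Zb.min' hZbne := hordXZ _ (max'_mem _ _) _ (min'_mem _ _)
    have f3 : Zb.max' hZbne ≤ Yc.max' hYcne := le_max' _ _ (hZbsub (max'_mem _ _))
    have f4 : Zb.card ≤ Zb.max' hZbne - Zb.min' hZbne + 1 := by
      have hsub : Zb ⊆ Icc (Zb.min' hZbne) (Zb.max' hZbne) :=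
        fun x hx => mem_Icc.2 ⟨min'_le _ _ hx, le_max' _ _ hx⟩
      have := card_le_card hsub
      rw [Nat.card_Icc] at this
      omega
    have f5 : Xb.min' hXbne ≤ Xb.max' hXbne := min'_le _ _ (max'_mem _ _)
    have f6 : Zb.min' hZbne ≤ Zb.max' hZbne := min'_le _ _ (max'_mem _ _)
    omega
  -- the two-clump inequality (directional core)
  have hcore : ∀ c₁ c₂ : Fin 3, c₁ ≠ c₂ → r ≤ k c₁ → r ≤ k c₂ →
      ∀ (h1 : (S.filter (fun x => Δ x = c₁)).Nonempty) (h2 : (S.filter (fun x => Δ x = c₂)).Nonempty),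
      (S.filter (fun x => Δ x = c₁)).min' h1 < (S.filter (fun x => Δ x = c₂)).min' h2 →
      k c₁ + k c₂ ≤ (t - m₀) + s - 1 := by
    intro c₁ c₂ hne hk1 hk2 h1 h2 hlt
    have hdisj : Disjoint (S.filter (fun x => Δ x = c₁)) (S.filter (fun x => Δ x = c₂)) := by
      rw [disjoint_left]
      intro a haY haZ
      exact hne (((mem_filter.1 haY).2).symm.trans (mem_filter.1 haZ).2)
    have hav : ∀ X : Finset ℕ, X ⊆ S.filter (fun x => Δ x = c₁) → X.card = s →
        (∀ a ∈ X, ∀ b ∈ S.filter (fun x => Δ x = c₂), a < b) →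
        diam (S.filter (fun x => Δ x = c₂)) < diam X := by
      intro X hXsub hXcard hord
      exact av2 X (S.filter (fun x => Δ x = c₂)) (hXsub.trans (hfsub c₁)) (hfsub c₂)
        (fun a ha b hb => hfmono c₁ a (hXsub ha) b (hXsub hb)) (hfmono c₂)
        (le_of_eq hXcard.symm) hk2 hord
    exact pair_core s r (t - m₀) hs hsr _ _ h1 h2 (hclump c₁ hk1) (hclump c₂ hk2) hdisj
      (fun x hx => by have := hftl c₁ x hx; omega) (Or.inr trivial) hav hk2 hlt
  have hpair : ∀ c₁ c₂ : Fin 3, c₁ ≠ c₂ → r ≤ k c₁ → r ≤ k c₂ →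
      k c₁ + k c₂ ≤ (t - m₀) + s - 1 := by
    intro c₁ c₂ hne hk1 hk2
    have hne1 : (S.filter (fun x => Δ x = c₁)).Nonempty := by
      rw [← card_pos]
      have : (S.filter (fun x => Δ x = c₁)).card = k c₁ := rfl
      omega
    have hne2 : (S.filter (fun x => Δ x = c₂)).Nonempty := by
      rw [← card_pos]
      have : (S.filter (fun x => Δ x = c₂)).card = k c₂ := rfl
      omega
    rcases lt_trichotomy ((S.filter (fun x => Δ x = c₁)).min' hne1)
      ((S.filter (fun x => Δ x = c₂)).min' hne2) with h | h | h
    · exact hcore c₁ c₂ hne hk1 hk2 hne1 hne2 h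
    · exfalso
      have hmem := min'_mem _ hne2
      rw [← h] at hmem
      exact hne (((mem_filter.1 (min'_mem _ hne1)).2).symm.trans (mem_filter.1 hmem).2)
    · have := hcore c₂ c₁ hne.symm hk2 hk1 hne2 hne1 h
      omega
  -- final case analysis
  rcases le_or_gt r (k 0) with h0 | h0 <;> rcases le_or_gt r (k 1) with h1 | h1 <;>
    rcases le_or_gt r (k 2) with h2 | h2
  · have p01 := hpair 0 1 (by decide) h0 h1
    have p02 := hpair 0 2 (by decide) h0 h2
    have p12 := hpair 1 2 (by decide) h1 h2
    omega
  · have p01 := hpair 0 1 (by decide) h0 h1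
    omega
  · have p02 := hpair 0 2 (by decide) h0 h2
    omega
  · have := hsingle 0 (by omega)
    omega
  · have p12 := hpair 1 2 (by decide) h1 h2
    omega
  · have := hsingle 1 (by omega)
    omega
  · have := hsingle 2 (by omega)
    omega
  · omega

/-- the extremal 3-coloring -/
def chi (s x : ℕ) : Fin 3 :=
  if x = 1 ∨ (2*s ≤ x ∧ x ≤ 3*s-2) ∨ 7*s-5 ≤ x then 0
  else if (2 ≤ x ∧ x ≤ s) ∨ (3*s-1 ≤ x ∧ x ≤ 4*s-3) ∨ (5*s-3 ≤ x ∧ x ≤ 6*s-5) then 1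
  else 2

lemma chi0 (s x : ℕ) (h : chi s x = 0) :
    x = 1 ∨ (2*s ≤ x ∧ x ≤ 3*s-2) ∨ 7*s-5 ≤ x := by
  unfold chi at h
  split_ifs at h with h1 h2
  · exact h1
  · exact absurd h (by decide)
  · exact absurd h (by decide)

lemma chi1 (s x : ℕ) (h : chi s x = 1) :
    (2 ≤ x ∧ x ≤ s) ∨ (3*s-1 ≤ x ∧ x ≤ 4*s-3) ∨ (5*s-3 ≤ x ∧ x ≤ 6*s-5) := by
  unfold chi at h
  split_ifs at h with h1 h2
  · exact absurd h (by decide)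
  · exact h2
  · exact absurd h (by decide)

lemma chi2 (s x : ℕ) (hs : 3 ≤ s) (hx : 1 ≤ x) (h : chi s x = 2) :
    (s+1 ≤ x ∧ x ≤ 2*s-1) ∨ (4*s-2 ≤ x ∧ x ≤ 5*s-4) ∨ (6*s-4 ≤ x ∧ x ≤ 7*s-6) := by
  unfold chi at h
  split_ifs at h with h1 h2
  · exact absurd h (by decide)
  · exact absurd h (by decide)
  · omega

lemma partB (s r : ℕ) (hs : 3 ≤ s) (hsr : s ≤ r) (X Y : Finset ℕ)
    (hX9 : ∀ x ∈ X, 1 ≤ x ∧ x ≤ 9*s-8) (hY9 : ∀ y ∈ Y, 1 ≤ y ∧ y ≤ 9*s-8)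
    (hmX : Mono (chi s) X) (hmY : Mono (chi s) Y)
    (hXcard : X.card = s) (hYcard : Y.card = r)
    (hord : ∀ a ∈ X, ∀ b ∈ Y, a < b)
    (hdXY : diam X ≤ diam Y) : False := by
  have hXne : X.Nonempty := card_pos.1 (by omega)
  have hYne : Y.Nonempty := card_pos.1 (by omega)
  set x1 := X.min' hXne with hx1def
  set x2 := X.max' hXne with hx2def
  set y1 := Y.min' hYne with hy1def
  set y2 := Y.max' hYne with hy2def
  have hx12 : x1 ≤ x2 := min'_le _ _ (max'_mem _ _)
  have hy12 : y1 ≤ y2 := min'_le _ _ (max'_mem _ _)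
  have hx11 : 1 ≤ x1 := (hX9 _ (min'_mem _ _)).1
  have hy11 : 1 ≤ y1 := (hY9 _ (min'_mem _ _)).1
  have hy28 : y2 ≤ 9*s-8 := (hY9 _ (max'_mem _ _)).2
  have horder : x2 < y1 := hord _ (max'_mem _ _) _ (min'_mem _ _)
  have hd : x2 - x1 ≤ y2 - y1 := by
    rw [diam_eq' X hXne, diam_eq' Y hYne] at hdXY; exact hdXY
  have hXup : ∀ x ∈ X, x ≤ x2 := fun x hx => le_max' _ _ hx
  have hXlo : ∀ x ∈ X, x1 ≤ x := fun x hx => min'_le _ _ hx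
  have hYlo : ∀ y ∈ Y, y1 ≤ y := fun y hy => min'_le _ _ hy
  -- capacity lemmas
  have hcapX : ∀ a b : ℕ, (∀ x ∈ X, a ≤ x ∧ x ≤ b) → s ≤ b + 1 - a := by
    intro a b h
    have := card_le_card (fun x hx => mem_Icc.2 (h x hx))
    rwa [hXcard, Nat.card_Icc] at this
  have hcapY : ∀ a b : ℕ, (∀ y ∈ Y, a ≤ y ∧ y ≤ b) → r ≤ b + 1 - a := by
    intro a b h
    have := card_le_card (fun y hy => mem_Icc.2 (h y hy))
    rwa [hYcard, Nat.card_Icc] at this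
  -- cross lemma
  have hcross : ∀ a₂ b₁ : ℕ, a₂ < b₁ → (∀ x ∈ X, x ≤ a₂ ∨ b₁ ≤ x) →
      (∃ x ∈ X, x ≤ a₂) → (∃ x ∈ X, b₁ ≤ x) → b₁ + s ≤ (x2 - x1) + a₂ + 2 := by
    intro a₂ b₁ hab hdisj hw1 hw2
    classical
    set F := X.filter (fun x => x ≤ a₂) with hF
    set G := X.filter (fun x => ¬ x ≤ a₂) with hG
    have hFG : F.card + G.card = X.card := card_filter_add_card_filter_not _
    have hFsub : F ⊆ Icc x1 a₂ := by
      intro x hx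
      exact mem_Icc.2 ⟨hXlo x (filter_subset _ _ hx), (mem_filter.1 hx).2⟩
    have hGsub : G ⊆ Icc b₁ x2 := by
      intro x hx
      have hx' := mem_filter.1 hx
      exact mem_Icc.2 ⟨(hdisj x hx'.1).resolve_left hx'.2, hXup x hx'.1⟩
    have hF1 : 1 ≤ F.card := by
      obtain ⟨x, hx, hxa⟩ := hw1
      exact card_pos.2 ⟨x, mem_filter.2 ⟨hx, hxa⟩⟩
    have hG1 : 1 ≤ G.card := by
      obtain ⟨x, hx, hxb⟩ := hw2
      exact card_pos.2 ⟨x, mem_filter.2 ⟨hx, by omega⟩⟩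
    have hFc := card_le_card hFsub
    have hGc := card_le_card hGsub
    rw [Nat.card_Icc] at hFc hGc
    omega
  -- color setup
  set cX := chi s x1 with hcXdef
  have hXcol : ∀ x ∈ X, chi s x = cX := fun x hx => hmX x hx x1 (min'_mem _ _)
  set cY := chi s y1 with hcYdef
  have hYcol : ∀ y ∈ Y, chi s y = cY := fun y hy => hmY y hy y1 (min'_mem _ _)
  have h3 : ∀ c : Fin 3, c = 0 ∨ c = 1 ∨ c = 2 := by decide
  -- if X is color 0 and bounded away from the tail, diam X ≥ 3s-3
  have hzeroX : cX = 0 → (∀ x ∈ X, x ≤ 7*s-6) → 3*s-3 ≤ x2 - x1 := by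
    intro hc hup
    have hblk : ∀ x ∈ X, x = 1 ∨ (2*s ≤ x ∧ x ≤ 3*s-2) := by
      intro x hx
      have h7 := hup x hx
      rcases chi0 s x (by rw [hXcol x hx, hc]) with h | h | h
      · exact Or.inl h
      · exact Or.inr h
      · omega
    by_cases h1X : (1:ℕ) ∈ X
    · by_cases h32 : (3*s-2) ∈ X
      · have e1 : x1 ≤ 1 := min'_le _ _ h1X
        have e2 : 3*s-2 ≤ x2 := le_max' _ _ h32
        omega
      · exfalso
        have hsub : X ⊆ insert 1 (Icc (2*s) (3*s-3)) := by
          intro x hx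
          rcases hblk x hx with h | h
          · rw [h]; exact mem_insert_self _ _
          · refine mem_insert_of_mem (mem_Icc.2 ⟨h.1, ?_⟩)
            rcases Nat.lt_or_ge x (3*s-2) with h' | h'
            · omega
            · exact absurd hx (by have : x = 3*s-2 := by omega
                                  rw [this]; exact h32)
        have hc1 := card_le_card hsub
        have hc2 := card_insert_le (1:ℕ) (Icc (2*s) (3*s-3))
        rw [Nat.card_Icc] at hc2
        omega
    · exfalso
      have hsub : X ⊆ Icc (2*s) (3*s-2) := by
        intro x hx
        rcases hblk x hx with h | h
        · exact absurd (h ▸ hx) h1X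
        · exact mem_Icc.2 h
      have hc1 := card_le_card hsub
      rw [Nat.card_Icc] at hc1
      omega
  -- main case analysis on the color of Y
  rcases h3 cY with hcy | hcy | hcy
  · -- Y has color 0
    have hYblk : ∀ y ∈ Y, y = 1 ∨ (2*s ≤ y ∧ y ≤ 3*s-2) ∨ 7*s-5 ≤ y :=
      fun y hy => chi0 s y (by rw [hYcol y hy, hcy])
    rcases hYblk y1 (min'_mem _ _) with hyb | hyb | hyb
    · omega
    · -- y1 in middle block : all of X is ≤ 3s-3, no mono s-set fits
      have hxup : ∀ x ∈ X, x ≤ 3*s-3 := fun x hx => by have := hXup x hx; omega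
      rcases h3 cX with hcx | hcx | hcx
      · have hsub : X ⊆ insert 1 (Icc (2*s) (3*s-3)) := by
          intro x hx
          have h7 := hxup x hx
          rcases chi0 s x (by rw [hXcol x hx, hcx]) with h | h | h
          · rw [h]; exact mem_insert_self _ _
          · exact mem_insert_of_mem (mem_Icc.2 ⟨h.1, by omega⟩)
          · omega
        have hc1 := card_le_card hsub
        have hc2 := card_insert_le (1:ℕ) (Icc (2*s) (3*s-3))
        rw [Nat.card_Icc] at hc2
        omega
      · have := hcapX 2 s (fun x hx => by
          have h7 := hxup x hx
          rcases chi1 s x (by rw [hXcol x hx, hcx]) with h | h | h <;> omega)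
        omega
      · have := hcapX (s+1) (2*s-1) (fun x hx => by
          have h7 := hxup x hx
          rcases chi2 s x hs (hX9 x hx).1 (by rw [hXcol x hx, hcx]) with h | h | h <;> omega)
        omega
    · -- y1 in the tail : diam Y ≤ 2s-3
      rcases h3 cX with hcx | hcx | hcx
      · by_cases htail : ∃ x ∈ X, 7*s-5 ≤ x
        · obtain ⟨w, hw, hw7⟩ := htail
          have hwx2 : 7*s-5 ≤ x2 := le_trans hw7 (hXup w hw)
          by_cases hlo : x1 ≤ 3*s-2
          · omega
          · have hXsub : X ⊆ Icc (7*s-5) (9*s-8) := by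
              intro x hx
              have hxl := hXlo x hx
              rcases chi0 s x (by rw [hXcol x hx, hcx]) with h | h | h
              · omega
              · omega
              · exact mem_Icc.2 ⟨h, (hX9 x hx).2⟩
            have hYsub : Y ⊆ Icc (7*s-5) (9*s-8) :=
              fun y hy => mem_Icc.2 ⟨le_trans hyb (hYlo y hy), (hY9 y hy).2⟩
            have hdisjXY : Disjoint X Y := by
              rw [disjoint_left]
              intro a haX haY
              exact absurd (hord a haX a haY) (lt_irrefl a)
            have hcup := card_le_card (union_subset hXsub hYsub)
            rw [card_union_of_disjoint hdisjXY, hXcard, hYcard, Nat.card_Icc] at hcup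
            omega
        · push_neg at htail
          have := hzeroX hcx (fun x hx => by have := htail x hx; omega)
          omega
      · -- X color 1 : diam X ≥ 2s-2 > 2s-3
        have hblk : ∀ x ∈ X, (2 ≤ x ∧ x ≤ s) ∨ (3*s-1 ≤ x ∧ x ≤ 4*s-3) ∨ (5*s-3 ≤ x ∧ x ≤ 6*s-5) :=
          fun x hx => chi1 s x (by rw [hXcol x hx, hcx])
        by_cases hB3 : ∀ x ∈ X, x ≤ 4*s-3
        · by_cases hloW : ∃ x ∈ X, x ≤ s
          · by_cases hhiW : ∃ x ∈ X, 3*s-1 ≤ x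
            · have := hcross s (3*s-1) (by omega) (fun x hx => by
                have h4 := hB3 x hx
                rcases hblk x hx with h | h | h <;> omega) hloW hhiW
              omega
            · push_neg at hhiW
              have := hcapX 2 s (fun x hx => by
                have h4 := hB3 x hx
                have h5 := hhiW x hx
                rcases hblk x hx with h | h | h <;> omega)
              omega
          · push_neg at hloW
            have := hcapX (3*s-1) (4*s-3) (fun x hx => by
              have h4 := hB3 x hx
              have h5 := hloW x hx
              rcases hblk x hx with h | h | h <;> omega)
            omega
        · push_neg at hB3
          obtain ⟨w, hw, hw4⟩ := hB3
          have hw5 : 5*s-3 ≤ w := by rcases hblk w hw with h | h | h <;> omega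
          by_cases hloW : ∃ x ∈ X, x ≤ 4*s-3
          · have := hcross (4*s-3) (5*s-3) (by omega) (fun x hx => by
              rcases hblk x hx with h | h | h <;> omega) hloW ⟨w, hw, hw5⟩
            omega
          · push_neg at hloW
            have := hcapX (5*s-3) (6*s-5) (fun x hx => by
              have h5 := hloW x hx
              rcases hblk x hx with h | h | h <;> omega)
            omega
      · -- X color 2 : diam X ≥ 2s-2 > 2s-3
        have hblk : ∀ x ∈ X, (s+1 ≤ x ∧ x ≤ 2*s-1) ∨ (4*s-2 ≤ x ∧ x ≤ 5*s-4) ∨ (6*s-4 ≤ x ∧ x ≤ 7*s-6) :=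
          fun x hx => chi2 s x hs (hX9 x hx).1 (by rw [hXcol x hx, hcx])
        by_cases hB3 : ∀ x ∈ X, x ≤ 5*s-4
        · by_cases hloW : ∃ x ∈ X, x ≤ 2*s-1
          · by_cases hhiW : ∃ x ∈ X, 4*s-2 ≤ x
            · have := hcross (2*s-1) (4*s-2) (by omega) (fun x hx => by
                have h4 := hB3 x hx
                rcases hblk x hx with h | h | h <;> omega) hloW hhiW
              omega
            · push_neg at hhiW
              have := hcapX (s+1) (2*s-1) (fun x hx => by
                have h4 := hB3 x hx
                have h5 := hhiW x hx
                rcases hblk x hx with h | h | h <;> omega)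
              omega
          · push_neg at hloW
            have := hcapX (4*s-2) (5*s-4) (fun x hx => by
              have h4 := hB3 x hx
              have h5 := hloW x hx
              rcases hblk x hx with h | h | h <;> omega)
            omega
        · push_neg at hB3
          obtain ⟨w, hw, hw4⟩ := hB3
          have hw5 : 6*s-4 ≤ w := by rcases hblk w hw with h | h | h <;> omega
          by_cases hloW : ∃ x ∈ X, x ≤ 5*s-4
          · have := hcross (5*s-4) (6*s-4) (by omega) (fun x hx => by
              rcases hblk x hx with h | h | h <;> omega) hloW ⟨w, hw, hw5⟩
            omega
          · push_neg at hloW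
            have := hcapX (6*s-4) (7*s-6) (fun x hx => by
              have h5 := hloW x hx
              rcases hblk x hx with h | h | h <;> omega)
            omega
  · -- Y has color 1
    have hYblk : ∀ y ∈ Y, (2 ≤ y ∧ y ≤ s) ∨ (3*s-1 ≤ y ∧ y ≤ 4*s-3) ∨ (5*s-3 ≤ y ∧ y ≤ 6*s-5) :=
      fun y hy => chi1 s y (by rw [hYcol y hy, hcy])
    rcases hYblk y1 (min'_mem _ _) with hyb | hyb | hyb
    · -- y1 ≤ s : X inside [1, s-1]
      have := hcapX 1 (s-1) (fun x hx => ⟨(hX9 x hx).1, by have := hXup x hx; omega⟩)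
      omega
    · -- y1 in B₂ : diam Y ≤ 3s-4, all x ≤ 4s-4
      have hy2b : y2 ≤ 6*s-5 := by
        rcases hYblk y2 (max'_mem _ _) with h | h | h <;> omega
      rcases h3 cX with hcx | hcx | hcx
      · have := hzeroX hcx (fun x hx => by have := hXup x hx; omega)
        omega
      · have hblk : ∀ x ∈ X, (2 ≤ x ∧ x ≤ s) ∨ (3*s-1 ≤ x ∧ x ≤ 4*s-3) ∨ (5*s-3 ≤ x ∧ x ≤ 6*s-5) :=
          fun x hx => chi1 s x (by rw [hXcol x hx, hcx])
        have hxlt : ∀ x ∈ X, x ≤ 4*s-4 := fun x hx => by have := hXup x hx; omega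
        by_cases hloW : ∃ x ∈ X, x ≤ s
        · by_cases hhiW : ∃ x ∈ X, 3*s-1 ≤ x
          · have := hcross s (3*s-1) (by omega) (fun x hx => by
              have h4 := hxlt x hx
              rcases hblk x hx with h | h | h <;> omega) hloW hhiW
            omega
          · push_neg at hhiW
            have := hcapX 2 s (fun x hx => by
              have h4 := hxlt x hx
              have h5 := hhiW x hx
              rcases hblk x hx with h | h | h <;> omega)
            omega
        · push_neg at hloW
          have := hcapX (3*s-1) (4*s-4) (fun x hx => by
            have h4 := hxlt x hx
            have h5 := hloW x hx
            rcases hblk x hx with h | h | h <;> omega)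
          omega
      · have := hcapX (s+1) (2*s-1) (fun x hx => by
          have h4 : x ≤ 4*s-4 := by have := hXup x hx; omega
          rcases chi2 s x hs (hX9 x hx).1 (by rw [hXcol x hx, hcx]) with h | h | h <;> omega)
        omega
    · -- y1 in B₃ : Y inside a block of size s-1
      have := hcapY (5*s-3) (6*s-5) (fun y hy => by
        have hyl := hYlo y hy
        rcases hYblk y hy with h | h | h <;> omega)
      omega
  · -- Y has color 2
    have hYblk : ∀ y ∈ Y, (s+1 ≤ y ∧ y ≤ 2*s-1) ∨ (4*s-2 ≤ y ∧ y ≤ 5*s-4) ∨ (6*s-4 ≤ y ∧ y ≤ 7*s-6) :=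
      fun y hy => chi2 s y hs (hY9 y hy).1 (by rw [hYcol y hy, hcy])
    rcases hYblk y1 (min'_mem _ _) with hyb | hyb | hyb
    · -- y1 ≤ 2s-1 : X inside [1, 2s-2]
      have hxup : ∀ x ∈ X, x ≤ 2*s-2 := fun x hx => by have := hXup x hx; omega
      rcases h3 cX with hcx | hcx | hcx
      · have hsub : X ⊆ ({1} : Finset ℕ) := by
          intro x hx
          have h7 := hxup x hx
          rcases chi0 s x (by rw [hXcol x hx, hcx]) with h | h | h
          · exact mem_singleton.2 h
          · omega
          · omega
        have hc1 := card_le_card hsub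
        rw [card_singleton] at hc1
        omega
      · have := hcapX 2 s (fun x hx => by
          have h7 := hxup x hx
          rcases chi1 s x (by rw [hXcol x hx, hcx]) with h | h | h <;> omega)
        omega
      · have := hcapX (s+1) (2*s-2) (fun x hx => by
          have h7 := hxup x hx
          rcases chi2 s x hs (hX9 x hx).1 (by rw [hXcol x hx, hcx]) with h | h | h <;> omega)
        omega
    · -- y1 in B'₂ : diam Y ≤ 3s-4, all x ≤ 5s-5
      have hy2b : y2 ≤ 7*s-6 := by
        rcases hYblk y2 (max'_mem _ _) with h | h | h <;> omega
      rcases h3 cX with hcx | hcx | hcx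
      · have := hzeroX hcx (fun x hx => by have := hXup x hx; omega)
        omega
      · have hblk : ∀ x ∈ X, (2 ≤ x ∧ x ≤ s) ∨ (3*s-1 ≤ x ∧ x ≤ 4*s-3) ∨ (5*s-3 ≤ x ∧ x ≤ 6*s-5) :=
          fun x hx => chi1 s x (by rw [hXcol x hx, hcx])
        have hxlt : ∀ x ∈ X, x ≤ 5*s-5 := fun x hx => by have := hXup x hx; omega
        by_cases hloW : ∃ x ∈ X, x ≤ s
        · by_cases hhiW : ∃ x ∈ X, 3*s-1 ≤ x
          · have := hcross s (3*s-1) (by omega) (fun x hx => by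
              have h4 := hxlt x hx
              rcases hblk x hx with h | h | h <;> omega) hloW hhiW
            omega
          · push_neg at hhiW
            have := hcapX 2 s (fun x hx => by
              have h4 := hxlt x hx
              have h5 := hhiW x hx
              rcases hblk x hx with h | h | h <;> omega)
            omega
        · push_neg at hloW
          have := hcapX (3*s-1) (4*s-3) (fun x hx => by
            have h4 := hxlt x hx
            have h5 := hloW x hx
            rcases hblk x hx with h | h | h <;> omega)
          omega
      · have hblk : ∀ x ∈ X, (s+1 ≤ x ∧ x ≤ 2*s-1) ∨ (4*s-2 ≤ x ∧ x ≤ 5*s-4) ∨ (6*s-4 ≤ x ∧ x ≤ 7*s-6) :=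
          fun x hx => chi2 s x hs (hX9 x hx).1 (by rw [hXcol x hx, hcx])
        have hxlt : ∀ x ∈ X, x ≤ 5*s-5 := fun x hx => by have := hXup x hx; omega
        by_cases hloW : ∃ x ∈ X, x ≤ 2*s-1
        · by_cases hhiW : ∃ x ∈ X, 4*s-2 ≤ x
          · have := hcross (2*s-1) (4*s-2) (by omega) (fun x hx => by
              have h4 := hxlt x hx
              rcases hblk x hx with h | h | h <;> omega) hloW hhiW
            omega
          · push_neg at hhiW
            have := hcapX (s+1) (2*s-1) (fun x hx => by
              have h4 := hxlt x hx
              have h5 := hhiW x hx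
              rcases hblk x hx with h | h | h <;> omega)
            omega
        · push_neg at hloW
          have := hcapX (4*s-2) (5*s-5) (fun x hx => by
            have h4 := hxlt x hx
            have h5 := hloW x hx
            rcases hblk x hx with h | h | h <;> omega)
          omega
    · -- y1 in B'₃ : Y inside a block of size s-2
      have := hcapY (6*s-4) (7*s-6) (fun y hy => by
        have hyl := hYlo y hy
        rcases hYblk y hy with h | h | h <;> omega)
      omega


theorem stmt7 (s r : ℕ) (hs : 3 ≤ s) (hsr : s ≤ r) (hr : r ≤ (5 * s - 1) / 3 - 1) :
    IsLeast {n : ℕ | ∀ Δ : ℕ → Fin 3, ∃ S₁ S₂ : Finset ℕ,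
    S₁ ⊆ Finset.Icc 1 n ∧ S₂ ⊆ Finset.Icc 1 n ∧
    Mono Δ S₁ ∧ Mono Δ S₂ ∧ S₁.card = s ∧ S₂.card = r ∧
    (∀ a ∈ S₁, ∀ b ∈ S₂, a < b) ∧ diam S₁ ≤ diam S₂} (9 * s - 7) := by
  have hr3 : 3*r + 4 ≤ 5*s := by
    have hq : 4 ≤ (5*s-1)/3 := by
      rw [Nat.le_div_iff_mul_le (by norm_num)]
      omega
    have hq2 := Nat.div_mul_le_self (5*s-1) 3
    have hq3 : (r+1) * 3 ≤ ((5*s-1)/3) * 3 := Nat.mul_le_mul_right 3 (by omega)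
    omega
  constructor
  · intro Δ
    exact partA s r hs hsr hr3 Δ
  · intro n hn
    by_contra hlt
    push_neg at hlt
    obtain ⟨X, Y, hXsub, hYsub, hmX, hmY, hXc, hYc, hord, hd⟩ := hn (chi s)
    exact partB s r hs hsr X Y
      (fun x hx => by have := mem_Icc.1 (hXsub hx); omega)
      (fun y hy => by have := mem_Icc.1 (hYsub hy); omega)
      hmX hmY hXc hYc hord hd
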